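/- (Bounded period of invariant subvarieties under uniformization) Let X be a projective variety over Q_p, U ⊆ X(Q_p) a p-adic analytic neighbourhood identified with Z_p^n, and f: U → U an analytic map such that there is l ≥ 1 and for each x ∈ U an analytic G_x: Z_p → Z_p^n with G_x(k) = f^{∘lk}(x) for k ∈ N. Let Y ⊆ X be a closed subvariety with f^{∘N}(Y ∩ U) ⊆ Y for some N ≥ 1, and with Y ∩ U infinite along orbits (each x ∈ Y ∩ U has f^{∘i}(x) ∈ Y for infinitely many i). Then f^{∘l}(Y ∩ U) ⊆ Y, i.e., the period of Y divides l, independently of Y. -/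

import Mathlib

open scoped BigOperators

set_option maxHeartbeats 1000000

open Filter Topology Finset

namespace StrassmannAux

variable {p : ℕ} [hp : Fact p.Prime]

/-- pairs (j, k < j) ≃ (k, m) with j = k + 1 + m -/
def sigmaFinEquiv : (Σ j : ℕ, Fin j) ≃ ℕ × ℕ where
  toFun s := ((s.2 : ℕ), s.1 - (s.2 : ℕ) - 1)
  invFun q := ⟨q.1 + 1 + q.2, ⟨q.1, by omega⟩⟩
  left_inv := by
    rintro ⟨j, k⟩
    have hk : (k : ℕ) < j := k.isLt
    apply Sigma.ext
    · simp only []; omega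
    · rw [Fin.heq_ext_iff (by simp only []; omega)]
  right_inv := by
    rintro ⟨k, m⟩
    have : k + 1 + m - k - 1 = m := by omega
    simp [this]

lemma summable_of_cofinite {α : Type*} {u : α → ℚ_[p]}
    (h : ∀ ε : ℝ, 0 < ε → {q : α | ε ≤ ‖u q‖}.Finite) : Summable u := by
  apply NonarchimedeanAddGroup.summable_of_tendsto_cofinite_zero
  rw [tendsto_zero_iff_norm_tendsto_zero, NormedAddCommGroup.tendsto_nhds_zero]
  intro ε hε
  rw [Filter.eventually_cofinite]
  convert h ε hε using 1
  ext q
  simp [Real.norm_eq_abs, abs_of_nonneg (norm_nonneg (u q)), not_lt]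

lemma norm_coe_le_one (z : ℤ_[p]) : ‖(z : ℚ_[p])‖ ≤ 1 := by
  rw [PadicInt.padic_norm_e_of_padicInt]; exact z.norm_le_one

lemma term_norm_le (c : ℚ_[p]) (z : ℤ_[p]) (j : ℕ) : ‖c * (z : ℚ_[p]) ^ j‖ ≤ ‖c‖ := by
  rw [norm_mul, norm_pow]
  calc ‖c‖ * ‖(z : ℚ_[p])‖ ^ j ≤ ‖c‖ * 1 := by
        have := pow_le_one₀ (norm_nonneg (z : ℚ_[p])) (norm_coe_le_one z) (n := j)
        exact mul_le_mul_of_nonneg_left this (norm_nonneg c)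
    _ = ‖c‖ := mul_one _

lemma eventually_norm_lt {c : ℕ → ℚ_[p]} (hc : Tendsto (fun j => ‖c j‖) atTop (𝓝 0))
    {ε : ℝ} (hε : 0 < ε) : ∃ K : ℕ, ∀ j, K ≤ j → ‖c j‖ < ε := by
  obtain ⟨K, hK⟩ := (Metric.tendsto_atTop.mp hc) ε hε
  refine ⟨K, fun j hj => ?_⟩
  have := hK j hj
  rwa [Real.dist_eq, sub_zero, abs_of_nonneg (norm_nonneg _)] at this

lemma summable_terms {c : ℕ → ℚ_[p]} (hc : Tendsto (fun j => ‖c j‖) atTop (𝓝 0))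
    (z : ℤ_[p]) : Summable (fun j => c j * (z : ℚ_[p]) ^ j) := by
  apply summable_of_cofinite
  intro ε hε
  obtain ⟨K, hK⟩ := eventually_norm_lt hc hε
  apply Set.Finite.subset (Set.finite_Iio K)
  intro j hj
  simp only [Set.mem_setOf_eq] at hj
  by_contra hlt
  simp only [Set.mem_Iio, not_lt] at hlt
  exact absurd (lt_of_le_of_lt (le_trans hj (term_norm_le _ _ _)) (hK j hlt)) (lt_irrefl _)

lemma norm_tsum_le {c : ℕ → ℚ_[p]} {C : ℝ} (hC : 0 ≤ C) (h : ∀ j, ‖c j‖ ≤ C) :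
    ‖∑' j, c j‖ ≤ C :=
  IsUltrametricDist.norm_tsum_le_of_forall_le_of_nonneg hC h

lemma shifted_summable {c : ℕ → ℚ_[p]} (hc : Tendsto (fun j => ‖c j‖) atTop (𝓝 0))
    (k : ℕ) (z₀ : ℤ_[p]) : Summable (fun m => c (k + 1 + m) * (z₀ : ℚ_[p]) ^ m) := by
  apply summable_of_cofinite
  intro ε hε
  obtain ⟨K, hK⟩ := eventually_norm_lt hc hε
  apply Set.Finite.subset (Set.finite_Iio K)
  intro m hm
  simp only [Set.mem_setOf_eq] at hm
  by_contra h
  simp only [Set.mem_Iio, not_lt] at h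
  exact absurd (lt_of_le_of_lt (hm.trans (term_norm_le _ _ _)) (hK _ (by omega)))
    (lt_irrefl _)

lemma shifted_tendsto {c : ℕ → ℚ_[p]} (hc : Tendsto (fun j => ‖c j‖) atTop (𝓝 0))
    (z₀ : ℤ_[p]) :
    Tendsto (fun k => ‖∑' m, c (k + 1 + m) * (z₀ : ℚ_[p]) ^ m‖) atTop (𝓝 0) := by
  rw [Metric.tendsto_atTop]
  intro ε hε
  obtain ⟨K, hK⟩ := eventually_norm_lt hc (half_pos hε)
  refine ⟨K, fun k hk => ?_⟩
  rw [Real.dist_eq, sub_zero, abs_of_nonneg (norm_nonneg _)]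
  have hb : ‖∑' m, c (k + 1 + m) * (z₀ : ℚ_[p]) ^ m‖ ≤ ε / 2 :=
    norm_tsum_le (half_pos hε).le
      (fun m => (term_norm_le _ _ _).trans (hK _ (by omega)).le)
  linarith

lemma summable_u {c : ℕ → ℚ_[p]} (hc : Tendsto (fun j => ‖c j‖) atTop (𝓝 0))
    (z z₀ : ℤ_[p]) :
    Summable (fun q : ℕ × ℕ =>
      (c (q.1 + 1 + q.2) * (z₀ : ℚ_[p]) ^ q.2) * (z : ℚ_[p]) ^ q.1) := by
  apply summable_of_cofinite
  intro ε hε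
  obtain ⟨K, hK⟩ := eventually_norm_lt hc hε
  apply Set.Finite.subset ((Set.finite_Iio K).prod (Set.finite_Iio K))
  rintro ⟨k, m⟩ hq
  simp only [Set.mem_setOf_eq] at hq
  have hb : ‖(c (k + 1 + m) * (z₀ : ℚ_[p]) ^ m) * (z : ℚ_[p]) ^ k‖ ≤ ‖c (k + 1 + m)‖ :=
    (term_norm_le _ z k).trans (term_norm_le _ z₀ m)
  by_contra h
  simp only [Set.mem_prod, Set.mem_Iio, not_and_or, not_lt] at h
  have : K ≤ k + 1 + m := by omega
  exact absurd (lt_of_le_of_lt (hq.trans hb) (hK _ this)) (lt_irrefl _)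

lemma factor {c : ℕ → ℚ_[p]} (hc : Tendsto (fun j => ‖c j‖) atTop (𝓝 0)) (z z₀ : ℤ_[p]) :
    (∑' j, c j * (z : ℚ_[p]) ^ j) - (∑' j, c j * (z₀ : ℚ_[p]) ^ j)
      = ((z : ℚ_[p]) - (z₀ : ℚ_[p])) *
        ∑' k, (∑' m, c (k + 1 + m) * (z₀ : ℚ_[p]) ^ m) * (z : ℚ_[p]) ^ k := by
  have hs1 := summable_terms hc z
  have hs2 := summable_terms hc z₀
  have hu := summable_u hc z z₀
  set w := (z : ℚ_[p]) with hw
  set w₀ := (z₀ : ℚ_[p]) with hw₀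
  have step1 : (∑' j, c j * w ^ j) - (∑' j, c j * w₀ ^ j)
      = ∑' j, (c j * (∑ i ∈ range j, w ^ i * w₀ ^ (j - 1 - i))) * (w - w₀) := by
    rw [← Summable.tsum_sub hs1 hs2]
    apply tsum_congr
    intro j
    rw [← mul_sub, ← geom_sum₂_mul w w₀ j]
    ring
  rw [step1, tsum_mul_right, mul_comm]
  congr 1
  have key : ∑' (q : ℕ × ℕ), (c (q.1 + 1 + q.2) * w₀ ^ q.2) * w ^ q.1
      = ∑' j, c j * (∑ i ∈ range j, w ^ i * w₀ ^ (j - 1 - i)) := by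
    rw [← sigmaFinEquiv.tsum_eq
      (fun q : ℕ × ℕ => (c (q.1 + 1 + q.2) * w₀ ^ q.2) * w ^ q.1)]
    have hsig : Summable (fun s : Σ j : ℕ, Fin j =>
        (c ((sigmaFinEquiv s).1 + 1 + (sigmaFinEquiv s).2)
          * w₀ ^ (sigmaFinEquiv s).2) * w ^ (sigmaFinEquiv s).1) :=
      (sigmaFinEquiv.summable_iff).mpr hu
    rw [Summable.tsum_sigma hsig]
    apply tsum_congr
    intro j
    rw [tsum_fintype, Finset.mul_sum, ← Fin.sum_univ_eq_sum_range]
    apply Finset.sum_congr rfl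
    intro k _
    have hk : (k : ℕ) < j := k.isLt
    show (c ((k : ℕ) + 1 + (j - (k : ℕ) - 1)) * w₀ ^ (j - (k : ℕ) - 1)) * w ^ (k : ℕ)
        = c j * (w ^ (k : ℕ) * w₀ ^ (j - 1 - (k : ℕ)))
    have e1 : (k : ℕ) + 1 + (j - (k : ℕ) - 1) = j := by omega
    have e2 : j - (k : ℕ) - 1 = j - 1 - (k : ℕ) := by omega
    rw [e1, e2]; ring
  have key2 : ∑' (q : ℕ × ℕ), (c (q.1 + 1 + q.2) * w₀ ^ q.2) * w ^ q.1
      = ∑' k, (∑' m, c (k + 1 + m) * w₀ ^ m) * w ^ k := by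
    rw [Summable.tsum_prod hu]
    apply tsum_congr; intro k
    show ∑' m, (c (k + 1 + m) * w₀ ^ m) * w ^ k = _
    rw [tsum_mul_right]
  rw [← key, key2]

lemma norm_le_div_p {x y : ℚ_[p]} (h : ‖x‖ < ‖y‖) : ‖x‖ ≤ ‖y‖ / p := by
  have hp1 : (1 : ℝ) < (p : ℝ) := by exact_mod_cast hp.out.one_lt
  have hy : y ≠ 0 := by
    intro hy0; rw [hy0, norm_zero] at h; exact absurd (norm_nonneg x) (not_le.mpr h)
  rcases eq_or_ne x 0 with hx | hx
  · rw [hx, norm_zero]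
    have : (0:ℝ) < ‖y‖ := norm_pos_iff.mpr hy
    positivity
  · rw [Padic.norm_eq_zpow_neg_valuation hx, Padic.norm_eq_zpow_neg_valuation hy] at *
    have hexp : -x.valuation < -y.valuation := (zpow_lt_zpow_iff_right₀ hp1).mp h
    have hle : -x.valuation ≤ -y.valuation - 1 := by omega
    calc (p : ℝ) ^ (-x.valuation) ≤ (p : ℝ) ^ (-y.valuation - 1) :=
          zpow_le_zpow_right₀ hp1.le hle
      _ = (p : ℝ) ^ (-y.valuation) / p := by
          rw [zpow_sub₀ (by positivity), zpow_one]

lemma norm_add_eq_of_lt {x y : ℚ_[p]} (h : ‖y‖ < ‖x‖) : ‖x + y‖ = ‖x‖ := by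
  apply le_antisymm
  · exact le_trans (IsUltrametricDist.norm_add_le_max x y) (max_le le_rfl h.le)
  · have h2 : ‖x‖ ≤ max ‖x + y‖ ‖y‖ := by
      simpa [norm_neg] using IsUltrametricDist.norm_add_le_max (x + y) (-y)
    rcases max_cases ‖x + y‖ ‖y‖ with ⟨he, _⟩ | ⟨he, _⟩
    · rwa [he] at h2
    · rw [he] at h2; exact absurd h (not_lt.mpr h2)

lemma hp1R : (1 : ℝ) < (p : ℝ) := by exact_mod_cast hp.out.one_lt

lemma strassmann_aux :
    ∀ (J : ℕ) (c : ℕ → ℚ_[p]), Tendsto (fun j => ‖c j‖) atTop (𝓝 0) →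
      (∀ j, ‖c j‖ ≤ ‖c J‖) → (∀ j, J < j → ‖c j‖ < ‖c J‖) → c J ≠ 0 →
      ¬ {z : ℤ_[p] | ∑' j, c j * (z : ℚ_[p]) ^ j = 0}.Infinite := by
  intro J
  induction J with
  | zero =>
    intro c hc _ hstr h0 hinf
    obtain ⟨z, hz⟩ := hinf.nonempty
    simp only [Set.mem_setOf_eq] at hz
    have hM : (0 : ℝ) < ‖c 0‖ := norm_pos_iff.mpr h0
    have hsum : Summable (fun j => c (j + 1) * (z : ℚ_[p]) ^ (j + 1)) := by
      have := (summable_terms hc z)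
      exact ((summable_nat_add_iff 1).mpr this)
    have hsplit : (0 : ℚ_[p]) = c 0 * (z : ℚ_[p]) ^ 0 +
        ∑' j, c (j + 1) * (z : ℚ_[p]) ^ (j + 1) := by
      rw [← hz]; exact Summable.tsum_eq_zero_add (summable_terms hc z)
    have htail : ‖∑' j, c (j + 1) * (z : ℚ_[p]) ^ (j + 1)‖ ≤ ‖c 0‖ / p := by
      apply norm_tsum_le (by positivity)
      intro j
      exact (term_norm_le _ _ _).trans (norm_le_div_p (hstr (j + 1) (by omega)))
    have : ‖c 0‖ ≤ ‖c 0‖ / p := by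
      have : c 0 * (z : ℚ_[p]) ^ 0 = - ∑' j, c (j + 1) * (z : ℚ_[p]) ^ (j + 1) := by
        rw [eq_neg_iff_add_eq_zero]; exact hsplit.symm
      calc ‖c 0‖ = ‖c 0 * (z : ℚ_[p]) ^ 0‖ := by simp
        _ = ‖∑' j, c (j + 1) * (z : ℚ_[p]) ^ (j + 1)‖ := by rw [this, norm_neg]
        _ ≤ ‖c 0‖ / p := htail
    have hplt : ‖c 0‖ / p < ‖c 0‖ := by
      rw [div_lt_iff₀ (by exact_mod_cast hp.out.pos : (0:ℝ) < (p:ℝ))]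
      nlinarith [hp1R (p := p)]
    linarith
  | succ J ih =>
    intro c hc hmax hstr h0 hinf
    obtain ⟨z₀, hz₀⟩ := hinf.nonempty
    simp only [Set.mem_setOf_eq] at hz₀
    set M : ℝ := ‖c (J + 1)‖ with hMdef
    have hM : (0 : ℝ) < M := norm_pos_iff.mpr h0
    set d : ℕ → ℚ_[p] := fun k => ∑' m, c (k + 1 + m) * ((z₀ : ℚ_[p])) ^ m with hd
    have hdt : Tendsto (fun k => ‖d k‖) atTop (𝓝 0) := shifted_tendsto hc z₀
    -- ‖d J‖ = M
    have hdJ : ‖d J‖ = M := by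
      have hsum : Summable (fun m => c (J + 1 + m) * (z₀ : ℚ_[p]) ^ m) :=
        shifted_summable hc J z₀
      have hsplit : d J = c (J + 1) * (z₀ : ℚ_[p]) ^ 0 +
          ∑' m, c (J + 1 + (m + 1)) * (z₀ : ℚ_[p]) ^ (m + 1) := by
        rw [hd]
        simpa using Summable.tsum_eq_zero_add hsum
      have htail : ‖∑' m, c (J + 1 + (m + 1)) * (z₀ : ℚ_[p]) ^ (m + 1)‖ ≤ M / p := by
        apply norm_tsum_le (by positivity)
        intro m
        exact (term_norm_le _ _ _).trans (norm_le_div_p (hstr _ (by omega)))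
      have hplt : M / p < M := by
        rw [div_lt_iff₀ (by exact_mod_cast hp.out.pos : (0:ℝ) < (p:ℝ))]
        nlinarith [hp1R (p := p)]
      rw [hsplit, norm_add_eq_of_lt]
      · simp [hMdef]
      · simp only [pow_zero, mul_one]
        exact lt_of_le_of_lt htail (by simpa using hplt)
    have hmax' : ∀ k, ‖d k‖ ≤ ‖d J‖ := by
      intro k
      rw [hdJ]
      apply norm_tsum_le hM.le
      intro m
      exact (term_norm_le _ _ _).trans (hmax _)
    have hstr' : ∀ k, J < k → ‖d k‖ < ‖d J‖ := by
      intro k hk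
      rw [hdJ]
      have : ‖d k‖ ≤ M / p := by
        apply norm_tsum_le (by positivity)
        intro m
        exact (term_norm_le _ _ _).trans (norm_le_div_p (hstr _ (by omega)))
      have hplt : M / p < M := by
        rw [div_lt_iff₀ (by exact_mod_cast hp.out.pos : (0:ℝ) < (p:ℝ))]
        nlinarith [hp1R (p := p)]
      linarith
    have hd0 : d J ≠ 0 := by
      intro h
      rw [h, norm_zero] at hdJ
      linarith
    apply ih d hdt hmax' hstr' hd0
    have hsub : {z : ℤ_[p] | ∑' j, c j * (z : ℚ_[p]) ^ j = 0} \ {z₀} ⊆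
        {z : ℤ_[p] | ∑' j, d j * (z : ℚ_[p]) ^ j = 0} := by
      rintro z ⟨hz, hne⟩
      simp only [Set.mem_setOf_eq] at hz ⊢
      have := factor hc z z₀
      rw [hz, hz₀, sub_self] at this
      have hwne : ((z : ℚ_[p]) - (z₀ : ℚ_[p])) ≠ 0 := by
        rw [sub_ne_zero]
        intro h
        apply hne
        exact Subtype.coe_injective h
      rcases mul_eq_zero.mp this.symm with h | h
      · exact absurd h hwne
      · exact h
    exact ((hinf.diff (Set.finite_singleton z₀)).mono hsub)

lemma strassmann {c : ℕ → ℚ_[p]} (hc : Tendsto (fun j => ‖c j‖) atTop (𝓝 0))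
    (hinf : {z : ℤ_[p] | ∑' j, c j * (z : ℚ_[p]) ^ j = 0}.Infinite) : ∀ j, c j = 0 := by
  by_contra h
  push_neg at h
  obtain ⟨j₀, hj₀⟩ := h
  have hj₀n : (0 : ℝ) < ‖c j₀‖ := norm_pos_iff.mpr hj₀
  have hfin : {j : ℕ | ‖c j₀‖ ≤ ‖c j‖}.Finite := by
    have hev : ∀ᶠ j in atTop, ‖c j‖ < ‖c j₀‖ := hc.eventually (eventually_lt_nhds hj₀n)
    rw [← Nat.cofinite_eq_atTop, Filter.eventually_cofinite] at hev
    convert hev using 1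
    ext j
    simp [not_lt]
  set s : Finset ℕ := hfin.toFinset with hs
  have hj₀s : j₀ ∈ s := by simp [hs]
  have hsne : s.Nonempty := ⟨j₀, hj₀s⟩
  set M : ℝ := s.sup' hsne (fun j => ‖c j‖) with hM
  have hMmem : ∃ j ∈ s, ‖c j‖ = M := by
    obtain ⟨j, hjs, hje⟩ := Finset.exists_mem_eq_sup' hsne (fun j => ‖c j‖)
    exact ⟨j, hjs, hje.symm⟩
  set t : Finset ℕ := s.filter (fun j => ‖c j‖ = M) with ht
  have htne : t.Nonempty := by
    obtain ⟨j, hjs, hje⟩ := hMmem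
    exact ⟨j, by simp [ht, hjs, hje]⟩
  set J : ℕ := t.max' htne with hJ
  have hJt : J ∈ t := t.max'_mem htne
  have hJM : ‖c J‖ = M := (Finset.mem_filter.mp hJt).2
  have hMj₀ : ‖c j₀‖ ≤ M := Finset.le_sup' (fun j => ‖c j‖) hj₀s
  have hmaxall : ∀ j, ‖c j‖ ≤ M := by
    intro j
    by_cases hjs : j ∈ s
    · exact Finset.le_sup' (fun j => ‖c j‖) hjs
    · have : ¬ ‖c j₀‖ ≤ ‖c j‖ := by
        intro hcon
        exact hjs (by simp [hs, hcon])
      push_neg at this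
      linarith
  have hstrict : ∀ j, J < j → ‖c j‖ < ‖c J‖ := by
    intro j hj
    rw [hJM]
    rcases lt_or_eq_of_le (hmaxall j) with h | h
    · exact h
    · exfalso
      have hjs : j ∈ s := by
        simp only [hs, Set.Finite.mem_toFinset, Set.mem_setOf_eq]
        rw [h]; exact hMj₀
      have hjt : j ∈ t := by simp [ht, hjs, h]
      exact absurd (t.le_max' j hjt) (not_le.mpr hj)
  have hJ0 : c J ≠ 0 := by
    intro h
    rw [h, norm_zero] at hJM
    linarith
  exact strassmann_aux J c hc (fun j => hJM ▸ hmaxall j) hstrict hJ0 hinf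

lemma norm_finset_sum_le {ι : Type*} (s : Finset ι) (g : ι → ℚ_[p]) {C : ℝ}
    (hC : 0 ≤ C) (h : ∀ i ∈ s, ‖g i‖ ≤ C) : ‖∑ i ∈ s, g i‖ ≤ C :=
  IsUltrametricDist.norm_sum_le_of_forall_le_of_nonneg hC h

lemma exists_bound {c : ℕ → ℚ_[p]} (hc : Tendsto (fun j => ‖c j‖) atTop (𝓝 0)) :
    ∃ B : ℝ, 0 ≤ B ∧ ∀ j, ‖c j‖ ≤ B := by
  obtain ⟨B, hB⟩ := hc.bddAbove_range
  exact ⟨B, (norm_nonneg (c 0)).trans (hB ⟨0, rfl⟩), fun j => hB ⟨j, rfl⟩⟩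

lemma rep_mul {c c' : ℕ → ℚ_[p]} (hc : Tendsto (fun j => ‖c j‖) atTop (𝓝 0))
    (hc' : Tendsto (fun j => ‖c' j‖) atTop (𝓝 0)) :
    ∃ e : ℕ → ℚ_[p], Tendsto (fun j => ‖e j‖) atTop (𝓝 0) ∧ ∀ z : ℤ_[p],
      (∑' j, c j * (z : ℚ_[p]) ^ j) * (∑' j, c' j * (z : ℚ_[p]) ^ j)
        = ∑' j, e j * (z : ℚ_[p]) ^ j := by
  obtain ⟨B, hB0, hB⟩ := exists_bound hc
  obtain ⟨B', hB'0, hB'⟩ := exists_bound hc'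
  set D : ℝ := max B B' with hD
  have hD0 : 0 ≤ D := le_trans hB0 (le_max_left _ _)
  have hcD : ∀ j, ‖c j‖ ≤ D := fun j => (hB j).trans (le_max_left _ _)
  have hc'D : ∀ j, ‖c' j‖ ≤ D := fun j => (hB' j).trans (le_max_right _ _)
  set e : ℕ → ℚ_[p] := fun m => ∑ q ∈ Finset.HasAntidiagonal.antidiagonal m, c q.1 * c' q.2 with he
  have key : ∀ ε : ℝ, 0 < ε → ∃ K : ℕ, ∀ i j : ℕ, K ≤ i + j → ‖c i * c' j‖ ≤ ε / 2 := by
    intro ε hε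
    have hδ : 0 < ε / (2 * (D + 1)) := by positivity
    obtain ⟨K₁, hK₁⟩ := eventually_norm_lt hc hδ
    obtain ⟨K₂, hK₂⟩ := eventually_norm_lt hc' hδ
    refine ⟨K₁ + K₂, fun i j hij => ?_⟩
    have hkey : ‖c i * c' j‖ ≤ (ε / (2 * (D + 1))) * D := by
      rcases le_or_gt K₁ i with hi | hi
      · rw [norm_mul]
        exact mul_le_mul (hK₁ i hi).le (hc'D j) (norm_nonneg _) hδ.le
      · have hj : K₂ ≤ j := by omega
        rw [norm_mul, mul_comm]
        exact mul_le_mul (hK₂ j hj).le (hcD i) (norm_nonneg _) hδ.le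
    calc ‖c i * c' j‖ ≤ (ε / (2 * (D + 1))) * D := hkey
      _ ≤ ε / 2 := by
          rw [div_mul_eq_mul_div, div_le_div_iff₀ (by positivity) (by norm_num)]
          nlinarith
  refine ⟨e, ?_, ?_⟩
  · rw [Metric.tendsto_atTop]
    intro ε hε
    obtain ⟨K, hK⟩ := key ε hε
    refine ⟨K, fun m hm => ?_⟩
    rw [Real.dist_eq, sub_zero, abs_of_nonneg (norm_nonneg _)]
    have : ‖e m‖ ≤ ε / 2 := by
      apply norm_finset_sum_le _ _ (by positivity)
      rintro ⟨i, j⟩ hij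
      rw [Finset.HasAntidiagonal.mem_antidiagonal] at hij
      exact hK i j (by omega)
    linarith
  · intro z
    have hsum2 : Summable (fun q : ℕ × ℕ =>
        (c q.1 * (z : ℚ_[p]) ^ q.1) * (c' q.2 * (z : ℚ_[p]) ^ q.2)) := by
      apply summable_of_cofinite
      intro ε hε
      obtain ⟨K, hK⟩ := key ε hε
      apply Set.Finite.subset ((Set.finite_Iio K).prod (Set.finite_Iio K))
      rintro ⟨i, j⟩ hq
      simp only [Set.mem_setOf_eq] at hq
      by_contra h
      simp only [Set.mem_prod, Set.mem_Iio, not_and_or, not_lt] at h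
      have hb : ‖(c i * (z : ℚ_[p]) ^ i) * (c' j * (z : ℚ_[p]) ^ j)‖ ≤ ‖c i * c' j‖ := by
        rw [norm_mul, norm_mul (c i), norm_mul (c' j), norm_mul]
        calc ‖c i‖ * ‖(z:ℚ_[p])^i‖ * (‖c' j‖ * ‖(z:ℚ_[p])^j‖)
            ≤ ‖c i‖ * 1 * (‖c' j‖ * 1) := by
              have h1 : ‖(z:ℚ_[p])^i‖ ≤ 1 := by
                have := term_norm_le 1 z i; simpa using this
              have h2 : ‖(z:ℚ_[p])^j‖ ≤ 1 := by
                have := term_norm_le 1 z j; simpa using this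
              gcongr <;> positivity
          _ = ‖c i‖ * ‖c' j‖ := by ring
      have hK' : ‖c i * c' j‖ ≤ ε / 2 := hK i j (by omega)
      have : ε ≤ ε / 2 := hq.trans (hb.trans hK')
      linarith
    have := Summable.tsum_mul_tsum_eq_tsum_sum_antidiagonal (summable_terms hc z)
      (summable_terms hc' z) hsum2
    rw [this]
    apply tsum_congr
    intro m
    rw [he, Finset.sum_mul]
    apply Finset.sum_congr rfl
    rintro ⟨i, j⟩ hij
    rw [Finset.HasAntidiagonal.mem_antidiagonal] at hij
    simp only
    rw [← hij, pow_add]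
    ring

lemma rep_poly {n : ℕ} (b : ℕ → Fin n → ℚ_[p])
    (hb : ∀ i, Tendsto (fun j => ‖b j i‖) atTop (𝓝 0))
    (P : MvPolynomial (Fin n) ℚ_[p]) :
    ∃ c : ℕ → ℚ_[p], Tendsto (fun j => ‖c j‖) atTop (𝓝 0) ∧
      ∀ z : ℤ_[p], MvPolynomial.eval (fun i => ∑' j, b j i * (z : ℚ_[p]) ^ j) P
        = ∑' j, c j * (z : ℚ_[p]) ^ j := by
  induction P using MvPolynomial.induction_on with
  | C a =>
    refine ⟨fun j => if j = 0 then a else 0, ?_, ?_⟩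
    · have hev : (fun j => ‖(if j = 0 then a else (0:ℚ_[p]))‖) =ᶠ[atTop] (fun _ => 0) := by
        filter_upwards [eventually_gt_atTop 0] with j hj
        simp [hj.ne']
      exact Tendsto.congr' hev.symm tendsto_const_nhds
    · intro z
      rw [MvPolynomial.eval_C]
      rw [tsum_eq_single 0]
      · simp
      · intro j hj; simp [hj]
  | add P Q hP hQ =>
    obtain ⟨c, hct, hcr⟩ := hP
    obtain ⟨c', hct', hcr'⟩ := hQ
    refine ⟨fun j => c j + c' j, ?_, ?_⟩
    · have h1 : Tendsto (fun j => ‖c j‖ + ‖c' j‖) atTop (𝓝 0) := by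
        simpa using hct.add hct'
      apply squeeze_zero (fun j => norm_nonneg _) (fun j => norm_add_le _ _) h1
    · intro z
      rw [MvPolynomial.eval_add, hcr z, hcr' z]
      have h1 := summable_terms hct z
      have h2 := summable_terms hct' z
      rw [← Summable.tsum_add h1 h2]
      apply tsum_congr
      intro j
      ring
  | mul_X P i hP =>
    obtain ⟨c, hct, hcr⟩ := hP
    obtain ⟨e, het, her⟩ := rep_mul hct (hb i)
    refine ⟨e, het, ?_⟩
    intro z
    rw [MvPolynomial.eval_mul, MvPolynomial.eval_X, hcr z, ← her z]

end StrassmannAux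

/-- Bounded period of invariant subvarieties under uniformization: let
`U = ℤ_p^n` be a `p`-adic analytic neighbourhood in a projective variety, `f : U → U`
an analytic map such that for some `l ≥ 1` every orbit is uniformized: for each `x ∈ U`
there is a `p`-adic analytic `G_x : ℤ_p → ℚ_p^n` with `G_x(k) = f^{∘lk}(x)` for `k ∈ ℕ`.
Let `Y` be the subvariety of `U` cut out by a set `Ps` of polynomials, with
`f^{∘N}(Y) ⊆ Y` for some `N ≥ 1`, and suppose each `x ∈ Y` has `f^{∘i}(x) ∈ Y` for
infinitely many `i`.  Then `f^{∘l}(Y) ⊆ Y`: the period of `Y` divides `l`,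
independently of `Y`. -/
theorem invariant_subvariety_bounded_period (p : ℕ) [Fact p.Prime] (n : ℕ)
    (f : (Fin n → ℤ_[p]) → (Fin n → ℤ_[p])) (l : ℕ) (hl : 0 < l)
    (hunif : ∀ x : Fin n → ℤ_[p], ∃ b : ℕ → Fin n → ℚ_[p],
      (∀ i, Filter.Tendsto (fun k => ‖b k i‖) Filter.atTop (nhds 0)) ∧
      ∀ (k : ℕ) (i : Fin n),
        (f^[l * k] x i : ℚ_[p]) = ∑' j : ℕ, b j i * ((k : ℤ_[p]) : ℚ_[p]) ^ j)
    (Ps : Set (MvPolynomial (Fin n) ℚ_[p]))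
    (Y : Set (Fin n → ℤ_[p]))
    (hY : Y = { x | ∀ P ∈ Ps, MvPolynomial.eval (fun i => (x i : ℚ_[p])) P = 0 })
    (N : ℕ) (hN : 0 < N) (hinv : ∀ x ∈ Y, f^[N] x ∈ Y)
    (hrec : ∀ x ∈ Y, { i : ℕ | f^[i] x ∈ Y }.Infinite) :
    ∀ x ∈ Y, f^[l] x ∈ Y := by
  intro x hx
  obtain ⟨b, hb, hbeq⟩ := hunif x
  have hNmul : ∀ m : ℕ, f^[N * m] x ∈ Y := by
    intro m
    induction m with
    | zero => simpa using hx
    | succ m ih =>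
      have h2 := hinv _ ih
      rw [← Function.iterate_add_apply] at h2
      have heq : N + N * m = N * (m + 1) := by ring
      rwa [heq] at h2
  rw [hY]
  simp only [Set.mem_setOf_eq]
  intro P hP
  obtain ⟨c, hct, hcr⟩ := StrassmannAux.rep_poly b hb P
  have hzero : ∀ j, c j = 0 := by
    apply StrassmannAux.strassmann hct
    have hinj : Function.Injective (fun k : ℕ => ((N * k : ℕ) : ℤ_[p])) := by
      intro a b h
      have : N * a = N * b := Nat.cast_injective h
      exact Nat.eq_of_mul_eq_mul_left hN this
    apply Set.Infinite.mono ?_ (Set.infinite_range_of_injective hinj)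
    rintro _ ⟨k, rfl⟩
    simp only [Set.mem_setOf_eq]
    rw [← hcr ((N * k : ℕ) : ℤ_[p])]
    have harg : (fun i => ∑' j, b j i * (((N * k : ℕ) : ℤ_[p]) : ℚ_[p]) ^ j)
        = fun i => ((f^[l * (N * k)] x i : ℚ_[p])) :=
      funext fun i => (hbeq (N * k) i).symm
    rw [harg]
    have hmem : f^[l * (N * k)] x ∈ Y := by
      have h3 := hNmul (l * k)
      have heq : N * (l * k) = l * (N * k) := by ring
      rwa [heq] at h3
    rw [hY] at hmem
    exact hmem P hP
  have hz1 : ∑' j, c j * ((1 : ℤ_[p]) : ℚ_[p]) ^ j = 0 := by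
    simp [hzero]
  have h1 := hcr 1
  rw [hz1] at h1
  have harg : (fun i => ((f^[l] x i : ℚ_[p])))
      = fun i => ∑' j, b j i * ((1 : ℤ_[p]) : ℚ_[p]) ^ j := by
    funext i
    have := hbeq 1 i
    rwa [mul_one, Nat.cast_one] at this
  rw [harg]
  exact h1
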